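/- The splitting field over ℚ of the polynomial f(X) = X·(X² − 8X − 2)·(X² + 2)·(X⁴ − 16X³ − 12X² + 32X + 4) is the 24th cyclotomic field ℚ(ζ₂₄); that is, f splits completely in ℚ(ζ₂₄) and ℚ(ζ₂₄) is generated over ℚ by the roots of f. -/

import Mathlib

open Polynomial

/-- The polynomial `X(X² − 8X − 2)(X² + 2)(X⁴ − 16X³ − 12X² + 32X + 4)` whose
roots are the abscissas of the `4`-torsion points of the elliptic curve
`y² = x³ − 8x² − 2x`. -/
noncomputable def fourTorsionAbscissaPoly : Polynomial ℚ :=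
  X * (X ^ 2 - 8 * X - 2) * (X ^ 2 + 2)
    * (X ^ 4 - 16 * X ^ 3 - 12 * X ^ 2 + 32 * X + 4)

set_option maxHeartbeats 2000000 in
/-- The field generated over `ℚ` by the abscissas of the `4`-torsion points of
the elliptic curve `y² = x³ − 8x² − 2x` is the `24`-th cyclotomic field:
`ℚ(ζ₂₄)` is a splitting field over `ℚ` of the polynomial
`X(X² − 8X − 2)(X² + 2)(X⁴ − 16X³ − 12X² + 32X + 4)`. -/
theorem fourTorsion_splittingField_cyclotomic24 :
    Polynomial.IsSplittingField ℚ (CyclotomicField 24 ℚ)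
      fourTorsionAbscissaPoly := by
  set K := CyclotomicField 24 ℚ
  haveI : IsCyclotomicExtension {24} ℚ K := CyclotomicField.isCyclotomicExtension 24 ℚ
  set ζ : K := IsCyclotomicExtension.zeta 24 ℚ K with hζdef
  have hζ : IsPrimitiveRoot ζ 24 := IsCyclotomicExtension.zeta_spec 24 ℚ K
  have h24 : ζ ^ 24 = 1 := hζ.pow_eq_one
  -- ζ^12 = -1
  have h12 : ζ ^ 12 = -1 := by
    have hne : ζ ^ 12 ≠ 1 := hζ.pow_ne_one_of_pos_of_lt (by norm_num) (by norm_num)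
    have h0 : (ζ ^ 12 - 1) * (ζ ^ 12 + 1) = 0 := by linear_combination h24
    rcases mul_eq_zero.mp h0 with h | h
    · exact absurd (by linear_combination h) hne
    · linear_combination h
  -- 1 + ζ^8 + ζ^16 = 0
  have hc : ζ ^ 16 + ζ ^ 8 + 1 = 0 := by
    have hne : ζ ^ 8 ≠ 1 := hζ.pow_ne_one_of_pos_of_lt (by norm_num) (by norm_num)
    have h0 : (ζ ^ 8 - 1) * (ζ ^ 16 + ζ ^ 8 + 1) = 0 := by linear_combination h24
    rcases mul_eq_zero.mp h0 with h | h
    · exact absurd (by linear_combination h) hne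
    · exact h
  -- ζ is a root of Φ₂₄ = X^8 - X^4 + 1
  have hΦ : ζ ^ 8 - ζ ^ 4 + 1 = 0 := by linear_combination hc - ζ ^ 4 * h12
  -- key square roots in K
  have h2 : (ζ ^ 3 + ζ ^ 21) ^ 2 = 2 := by
    linear_combination (-2 - 2 * ζ ^ 4 + ζ ^ 6 + ζ ^ 10 + 2 * ζ ^ 12 + 2 * ζ ^ 16 - ζ ^ 18
      - ζ ^ 22 + ζ ^ 30 + ζ ^ 34) * hΦ
  have h3 : (ζ ^ 2 + ζ ^ 22) ^ 2 = 3 := by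
    linear_combination (-3 - 2 * ζ ^ 4 + ζ ^ 8 + 3 * ζ ^ 12 + 2 * ζ ^ 16 - ζ ^ 20 - ζ ^ 24
      + ζ ^ 32 + ζ ^ 36) * hΦ
  have ht : (ζ ^ 3 + ζ ^ 9) ^ 2 = -2 := by
    linear_combination (2 + 2 * ζ ^ 4 + ζ ^ 6 + ζ ^ 10) * hΦ
  have hzeta : 4 * ζ = (ζ ^ 3 + ζ ^ 21) + (ζ ^ 3 + ζ ^ 21) * (ζ ^ 2 + ζ ^ 22)
      + (ζ ^ 3 + ζ ^ 9) * (ζ ^ 2 + ζ ^ 22) - (ζ ^ 3 + ζ ^ 9) := by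
    linear_combination (4 * ζ + 2 * ζ ^ 5 - ζ ^ 9 - ζ ^ 11 - 3 * ζ ^ 13 - ζ ^ 15
      - 2 * ζ ^ 17 - ζ ^ 31 - ζ ^ 35) * hΦ
  -- abbreviations
  set s2 : K := ζ ^ 3 + ζ ^ 21 with hs2def
  set s3 : K := ζ ^ 2 + ζ ^ 22 with hs3def
  set t : K := ζ ^ 3 + ζ ^ 9 with htdef
  -- the factorization of f over K
  have hq2 : (X - C (4 + 3 * s2)) * (X - C (4 - 3 * s2)) = X ^ 2 - 8 * X - 2 := by
    have e : (X - C (4 + 3 * s2)) * (X - C (4 - 3 * s2))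
        = X ^ 2 - 8 * X + C (16 - 9 * s2 ^ 2) := by
      simp only [map_sub, map_add, map_mul, map_pow, map_ofNat]
      ring
    rw [e, show (16 : K) - 9 * s2 ^ 2 = -2 by linear_combination (-9 : K) * h2]
    simp only [map_neg, map_ofNat]
    ring
  have hq2' : (X - C t) * (X - C (-t)) = X ^ 2 + 2 := by
    have e : (X - C t) * (X - C (-t)) = X ^ 2 + C (-(t ^ 2)) := by
      simp only [map_neg, map_pow]
      ring
    rw [e, show -(t ^ 2) = (2 : K) by linear_combination -ht]
    simp only [map_ofNat]
  have hq4 : (X - C (4 + 3 * s2 + 2 * s3 + 2 * (s2 * s3)))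
        * (X - C (4 + 3 * s2 - 2 * s3 - 2 * (s2 * s3)))
        * (X - C (4 - 3 * s2 + 2 * s3 - 2 * (s2 * s3)))
        * (X - C (4 - 3 * s2 - 2 * s3 + 2 * (s2 * s3)))
      = X ^ 4 - 16 * X ^ 3 - 12 * X ^ 2 + 32 * X + 4 := by
    set r1 : K := 4 + 3 * s2 + 2 * s3 + 2 * (s2 * s3) with hr1
    set r2 : K := 4 + 3 * s2 - 2 * s3 - 2 * (s2 * s3) with hr2
    set r3 : K := 4 - 3 * s2 + 2 * s3 - 2 * (s2 * s3) with hr3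
    set r4 : K := 4 - 3 * s2 - 2 * s3 + 2 * (s2 * s3) with hr4
    have he1 : r1 + r2 + r3 + r4 = 16 := by rw [hr1, hr2, hr3, hr4]; ring
    have he2 : r1 * r2 + r1 * r3 + r1 * r4 + r2 * r3 + r2 * r4 + r3 * r4 = -12 := by
      rw [hr1, hr2, hr3, hr4]
      linear_combination (-8 * s3 ^ 2 - 18) * h2 + (-24 : K) * h3
    have he3 : r1 * r2 * r3 + r1 * r2 * r4 + r1 * r3 * r4 + r2 * r3 * r4 = -32 := by
      rw [hr1, hr2, hr3, hr4]
      linear_combination (32 * s3 ^ 2 - 144) * h2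
    have he4 : r1 * r2 * r3 * r4 = 4 := by
      rw [hr1, hr2, hr3, hr4]
      linear_combination (16 * s2 ^ 2 * s3 ^ 4 - 72 * s2 ^ 2 * s3 ^ 2 + 81 * s2 ^ 2
        + 40 * s3 ^ 2 - 126) * h2 + (16 * s3 ^ 2) * h3
    have e : (X - C r1) * (X - C r2) * (X - C r3) * (X - C r4)
        = X ^ 4 - C (r1 + r2 + r3 + r4) * X ^ 3
          + C (r1 * r2 + r1 * r3 + r1 * r4 + r2 * r3 + r2 * r4 + r3 * r4) * X ^ 2
          - C (r1 * r2 * r3 + r1 * r2 * r4 + r1 * r3 * r4 + r2 * r3 * r4) * X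
          + C (r1 * r2 * r3 * r4) := by
      simp only [map_add, map_mul]
      ring
    rw [e, he1, he2, he3, he4]
    simp only [map_neg, map_ofNat]
    ring
  have hfact : fourTorsionAbscissaPoly.map (algebraMap ℚ K)
      = X * ((X - C (4 + 3 * s2)) * (X - C (4 - 3 * s2)))
        * ((X - C t) * (X - C (-t)))
        * ((X - C (4 + 3 * s2 + 2 * s3 + 2 * (s2 * s3)))
          * (X - C (4 + 3 * s2 - 2 * s3 - 2 * (s2 * s3)))
          * (X - C (4 - 3 * s2 + 2 * s3 - 2 * (s2 * s3)))
          * (X - C (4 - 3 * s2 - 2 * s3 + 2 * (s2 * s3)))) := by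
    rw [hq2, hq2', hq4]
    simp only [fourTorsionAbscissaPoly, Polynomial.map_mul, Polynomial.map_sub,
      Polynomial.map_add, Polynomial.map_pow, Polynomial.map_X, Polynomial.map_ofNat]
  have hfne : fourTorsionAbscissaPoly ≠ 0 := by
    intro h
    have := congrArg (Polynomial.eval 1) h
    simp [fourTorsionAbscissaPoly] at this
    norm_num at this
  -- roots of f in K
  have hroot : ∀ c : K,
      Polynomial.eval c (fourTorsionAbscissaPoly.map (algebraMap ℚ K)) = 0 →
      c ∈ fourTorsionAbscissaPoly.rootSet K := by
    intro c h
    rw [Polynomial.mem_rootSet]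
    exact ⟨hfne, by rw [Polynomial.aeval_def, ← Polynomial.eval_map]; exact h⟩
  constructor
  · rw [hfact]
    exact Splits.mul (Splits.mul (Splits.mul Splits.X
        (Splits.mul (Splits.X_sub_C _) (Splits.X_sub_C _)))
        (Splits.mul (Splits.X_sub_C _) (Splits.X_sub_C _)))
      (Splits.mul (Splits.mul (Splits.mul (Splits.X_sub_C _) (Splits.X_sub_C _))
        (Splits.X_sub_C _)) (Splits.X_sub_C _))
  · rw [eq_top_iff, ← IsCyclotomicExtension.adjoin_primitive_root_eq_top (A := ℚ) (n := 24) hζ]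
    apply Algebra.adjoin_le
    intro x hx
    rw [Set.mem_singleton_iff] at hx
    subst hx
    set A := Algebra.adjoin ℚ (fourTorsionAbscissaPoly.rootSet K) with hAdef
    have haA : (4 + 3 * s2 : K) ∈ A :=
      Algebra.subset_adjoin (hroot _ (by rw [hfact]; simp))
    have htA : t ∈ A :=
      Algebra.subset_adjoin (hroot _ (by rw [hfact]; simp))
    have hr1A : (4 + 3 * s2 + 2 * s3 + 2 * (s2 * s3) : K) ∈ A :=
      Algebra.subset_adjoin (hroot _ (by rw [hfact]; simp))
    have hr3A : (4 - 3 * s2 + 2 * s3 - 2 * (s2 * s3) : K) ∈ A :=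
      Algebra.subset_adjoin (hroot _ (by rw [hfact]; simp))
    have h4A : (4 : K) ∈ A := by
      have := A.algebraMap_mem (4 : ℚ)
      simpa using this
    have h8A : (8 : K) ∈ A := by
      have := A.algebraMap_mem (8 : ℚ)
      simpa using this
    have hs2A : s2 ∈ A := by
      have e : s2 = algebraMap ℚ K (1 / 3) * ((4 + 3 * s2) - 4) := by
        rw [map_div₀, map_one, map_ofNat]
        ring
      rw [e]
      exact A.mul_mem (A.algebraMap_mem _) (A.sub_mem haA h4A)
    have hs3A : s3 ∈ A := by
      have e : s3 = algebraMap ℚ K (1 / 4)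
          * ((4 + 3 * s2 + 2 * s3 + 2 * (s2 * s3)) + (4 - 3 * s2 + 2 * s3 - 2 * (s2 * s3)) - 8) := by
        rw [map_div₀, map_one, map_ofNat]
        ring
      rw [e]
      exact A.mul_mem (A.algebraMap_mem _) (A.sub_mem (A.add_mem hr1A hr3A) h8A)
    have e : ζ = algebraMap ℚ K (1 / 4) * (s2 + s2 * s3 + t * s3 - t) := by
      rw [map_div₀, map_one, map_ofNat]
      linear_combination (1 / 4 : K) * hzeta
    rw [e]
    exact A.mul_mem (A.algebraMap_mem _)
      (A.sub_mem (A.add_mem (A.add_mem hs2A (A.mul_mem hs2A hs3A)) (A.mul_mem htA hs3A)) htA)
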